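/- Let e ≥ 3 be odd. For all integers t ≥ 2 and m ≥ 0, the partition Δ_t ⊔ (1^{2m+1}) has 2-core Δ_{t−2} and twisted 2-quotient τ(Δ_t ⊔ 1^{2m+1}) = |(∅, 1^{t+m}), s_{t−2}⟩. -/

import Mathlib

namespace GUnBranching

/-- A partition, given by its (0-indexed) weakly decreasing, eventually zero
sequence of parts: `part k` is the (k+1)-st part `λ_{k+1}`. -/
structure Partition where
  part : ℕ → ℕ
  antitone : ∀ i j : ℕ, i ≤ j → part j ≤ part i
  eventually_zero : ∃ N : ℕ, ∀ n : ℕ, N ≤ n → part n = 0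

namespace Partition

/-- The set of boxes (row, column) (0-indexed) of the Young diagram of a partition. -/
def boxSet (p : Partition) : Set (ℕ × ℕ) := {b | b.2 < p.part b.1}

/-- The size `|λ|` of a partition: the number of boxes of its Young diagram. -/
noncomputable def size (p : Partition) : ℕ := p.boxSet.ncard

/-- The β-set `β(λ) = {λ_k - k + 1 : k ≥ 1}` (0-indexed: `{part k - k : k ∈ ℕ}`). -/
def betaSet (p : Partition) : Set ℤ := {z | ∃ k : ℕ, z = (p.part k : ℤ) - k}

/-- The charged β-set `{λ_k + s - k + 1 : k ≥ 1}` of `(λ, s)`. -/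
def chargedBetaSet (p : Partition) (s : ℤ) : Set ℤ :=
  {z | ∃ k : ℕ, z = (p.part k : ℤ) + s - k}

/-- The number of (nonzero) parts of a partition. -/
noncomputable def length (p : Partition) : ℕ := {k : ℕ | p.part k ≠ 0}.ncard

end Partition

/-- The empty partition `∅`. -/
def emptyPartition : Partition :=
  ⟨fun _ => 0, fun _ _ _ => le_rfl, ⟨0, fun _ _ => rfl⟩⟩

/-- The partition `3^a 2^b 1^c` (a parts equal to 3, b parts equal to 2, c parts equal to 1). -/
def threeTwoOne (a b c : ℕ) : Partition where
  part k := if k < a then 3 else if k < a + b then 2 else if k < a + b + c then 1 else 0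
  antitone i j h := by (try dsimp only); split_ifs <;> omega
  eventually_zero := ⟨a + b + c, fun n hn => by (try dsimp only); split_ifs <;> omega⟩

/-- The column partition `1^m`. -/
def column (m : ℕ) : Partition := threeTwoOne 0 0 m

/-- The staircase partition `Δ_t = (t, t-1, …, 2, 1)`. -/
def staircase (t : ℕ) : Partition where
  part k := t - k
  antitone i j h := Nat.sub_le_sub_left h t
  eventually_zero := ⟨t, fun n hn => Nat.sub_eq_zero_of_le hn⟩

/-- The partition `Δ_t ⊔ 1^r` (staircase with a column of `r` extra parts equal to 1). -/
def staircaseColumn (t r : ℕ) : Partition where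
  part k := if k < t then t - k else if k < t + r then 1 else 0
  antitone i j h := by (try dsimp only); split_ifs <;> omega
  eventually_zero := ⟨t + r, fun n hn => by (try dsimp only); split_ifs <;> omega⟩

/-- `p ⊔ 1^r` : append `r` extra parts equal to 1 to the partition `p`. -/
noncomputable def appendOnes (p : Partition) (r : ℕ) : Partition where
  part k := max (p.part k) (if k < p.length + r then 1 else 0)
  antitone i j h := max_le_max (p.antitone i j h) (by split_ifs <;> omega)
  eventually_zero := by
    obtain ⟨N, hN⟩ := p.eventually_zero
    refine ⟨max N (p.length + r), fun n hn => ?_⟩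
    have h1 : p.part n = 0 := hN n (le_trans (le_max_left _ _) hn)
    have h2 : ¬ n < p.length + r := by
      have := le_trans (le_max_right N (p.length + r)) hn
      omega
    simp [h1, h2]

/-- `mu` is obtained from `lam` by removing one rim `e`-hook: on β-sets, a bead `x`
with an empty spot at `x - e` is moved to `x - e`. -/
def RemoveHook (e : ℕ) (lam mu : Partition) : Prop :=
  ∃ x : ℤ, x ∈ lam.betaSet ∧ (x - e) ∉ lam.betaSet ∧
    mu.betaSet = insert (x - e) (lam.betaSet \ {x})

/-- A partition is an `e`-core if no rim `e`-hook can be removed from it. -/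
def IsECore (e : ℕ) (p : Partition) : Prop := ∀ mu : Partition, ¬ RemoveHook e p mu

/-- `core` is the `e`-core of `lam`: it is obtained from `lam` by repeatedly removing
rim `e`-hooks, and no further rim `e`-hook can be removed. -/
def HasECore (e : ℕ) (lam core : Partition) : Prop :=
  Relation.ReflTransGen (RemoveHook e) lam core ∧ IsECore e core

/-- `lam` and `mu` have the same `e`-core. -/
def SameECore (e : ℕ) (lam mu : Partition) : Prop :=
  ∃ core : Partition, HasECore e lam core ∧ HasECore e mu core

/-- `(q1, q2)` is the 2-quotient of `lam`: the odd (resp. even) β-numbers of `lam`,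
transformed by `v ↦ (v+1)/2` (resp. `v ↦ v/2`), form the β-set of `q1` (resp. `q2`)
for a suitable charge. -/
def IsTwoQuotient (lam q1 q2 : Partition) : Prop :=
  (∃ c : ℤ, q1.chargedBetaSet c = {z : ℤ | 2 * z - 1 ∈ lam.betaSet}) ∧
  (∃ c : ℤ, q2.chargedBetaSet c = {z : ℤ | 2 * z ∈ lam.betaSet})

/-- The charge `s_t`: `(-(t+1+e)/2, t/2)` for even `t`, `(-(t+1)/2, (t+e)/2)` for odd `t`. -/
def tauCharge (e t : ℕ) : ℤ × ℤ :=
  if t % 2 = 0 then (-(((t : ℤ) + 1 + e) / 2), (t : ℤ) / 2)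
  else (-(((t : ℤ) + 1) / 2), ((t : ℤ) + e) / 2)

/-- `bp` is the twisted 2-quotient `τ(lam)` of `lam`, a partition with 2-core `Δ_t`:
it is the 2-quotient for even `t` and the swapped 2-quotient for odd `t`; the
corresponding charge is `tauCharge e t`. -/
def IsTwistedQuotient (t : ℕ) (lam : Partition) (bp : Partition × Partition) : Prop :=
  HasECore 2 lam (staircase t) ∧
  (if t % 2 = 0 then IsTwoQuotient lam bp.1 bp.2 else IsTwoQuotient lam bp.2 bp.1)

/-- The abacus of a charged bipartition: positions are (column, row) where row
`0 : Fin 2` is the bottom row (first component, charge `s.1`) and row `1 : Fin 2`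
the top row (second component, charge `s.2`). -/
def abacus (bp : Partition × Partition) (s : ℤ × ℤ) : Set (ℤ × Fin 2) :=
  {b | b.1 ∈ (if b.2 = (0 : Fin 2) then bp.1.chargedBetaSet s.1 else bp.2.chargedBetaSet s.2)}

/-- `P` is an `e`-period of the abacus `A`: beads `(x, r 0), (x-1, r 1), …, (x-e+1, r (e-1))`
of `A` where `x` is the largest column containing a bead of `A`, `r i = 0` (bottom row)
whenever `(x - i, bottom)` is a bead of `A` (for `i < e-1`), and once in the bottom row the
period stays in the bottom row. -/
def IsEPeriodOf (e : ℕ) (A P : Set (ℤ × Fin 2)) : Prop :=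
  ∃ (x : ℤ) (r : ℕ → Fin 2),
    P = {b | ∃ i : ℕ, i < e ∧ b = ((x - i : ℤ), r i)} ∧
    (∀ i : ℕ, i < e → ((x - i : ℤ), r i) ∈ A) ∧
    (∀ b ∈ A, b.1 ≤ x) ∧
    (∀ i : ℕ, i + 1 < e → ((x - i : ℤ), (0 : Fin 2)) ∈ A → r i = 0) ∧
    (∀ i : ℕ, i + 1 < e → r i = 0 → r (i + 1) = 0)

/-- `P 0, P 1, P 2, …` is the sequence of `e`-periods of `A`:
each `P k` is the `e`-period of `A` minus the previous periods. -/
def IsPeriodSeq (e : ℕ) (A : Set (ℤ × Fin 2)) (P : ℕ → Set (ℤ × Fin 2)) : Prop :=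
  ∀ k : ℕ, IsEPeriodOf e (A \ ⋃ i ∈ Finset.range k, P i) (P k)

/-- The abacus `A` is totally `e`-periodic: the `k`-th `e`-period exists for every `k`. -/
def TotallyPeriodic (e : ℕ) (A : Set (ℤ × Fin 2)) : Prop :=
  ∃ P : ℕ → Set (ℤ × Fin 2), IsPeriodSeq e A P

/-- `P` is the `(k+1)`-st `e`-period of `A` (so `k = 0` gives the first `e`-period). -/
def IsKthPeriod (e : ℕ) (A : Set (ℤ × Fin 2)) (k : ℕ) (P : Set (ℤ × Fin 2)) : Prop :=
  ∃ Q : ℕ → Set (ℤ × Fin 2),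
    (∀ i : ℕ, i ≤ k → IsEPeriodOf e (A \ ⋃ j ∈ Finset.range i, Q j) (Q i)) ∧ Q k = P

/-- Shift a set of abacus positions one step to the right. -/
def shiftRight (P : Set (ℤ × Fin 2)) : Set (ℤ × Fin 2) := {b | (b.1 - 1, b.2) ∈ P}

/-- Edge of the `sl_∞`-crystal moving the `(k+1)`-st `e`-period one step to the right:
the shifted period must again be the `(k+1)`-st `e`-period of the resulting abacus. -/
def SlInfEdgeAt (e : ℕ) (s : ℤ × ℤ) (k : ℕ) (lam mu : Partition × Partition) : Prop :=
  TotallyPeriodic e (abacus lam s) ∧ TotallyPeriodic e (abacus mu s) ∧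
  ∃ P : Set (ℤ × Fin 2),
    IsKthPeriod e (abacus lam s) k P ∧
    abacus mu s = (abacus lam s \ P) ∪ shiftRight P ∧
    IsKthPeriod e (abacus mu s) k (shiftRight P)

/-- Edge of the `sl_∞`-crystal. -/
def SlInfEdge (e : ℕ) (s : ℤ × ℤ) (lam mu : Partition × Partition) : Prop :=
  ∃ k : ℕ, SlInfEdgeAt e s k lam mu

/-- A source vertex of the `sl_∞`-crystal: a vertex (totally `e`-periodic abacus)
with no incoming edge. -/
def IsSlInfSource (e : ℕ) (s : ℤ × ℤ) (bp : Partition × Partition) : Prop :=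
  TotallyPeriodic e (abacus bp s) ∧ ∀ lam : Partition × Partition, ¬ SlInfEdge e s lam bp

/-- A box of a bipartition: (component, row, column), all 0-indexed
(component `0 : Fin 2` is the first component `λ¹`). -/
abbrev Box := Fin 2 × ℕ × ℕ

/-- The component of a bipartition indexed by `j : Fin 2`. -/
def comp (bp : Partition × Partition) (j : Fin 2) : Partition :=
  if j = 0 then bp.1 else bp.2

/-- `b` is a box of the bipartition `bp`. -/
def IsBoxOf (bp : Partition × Partition) (b : Box) : Prop :=
  b.2.2 < (comp bp b.1).part b.2.1

/-- The (charged) content `ct(b) = y - x + s_j` of a box `b = (j, x, y)`. -/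
def content (s : ℤ × ℤ) (b : Box) : ℤ :=
  (b.2.2 : ℤ) - (b.2.1 : ℤ) + (if b.1 = 0 then s.1 else s.2)

/-- `b` is an addable box of the bipartition `bp`. -/
def IsAddable (bp : Partition × Partition) (b : Box) : Prop :=
  b.2.2 = (comp bp b.1).part b.2.1 ∧
  (b.2.1 = 0 ∨ (comp bp b.1).part b.2.1 < (comp bp b.1).part (b.2.1 - 1))

/-- `b` is a removable box of the bipartition `bp`. -/
def IsRemovable (bp : Partition × Partition) (b : Box) : Prop :=
  b.2.2 + 1 = (comp bp b.1).part b.2.1 ∧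
  (comp bp b.1).part (b.2.1 + 1) < (comp bp b.1).part b.2.1

/-- The total order on addable/removable boxes: `b ≤ b'` iff `b = b'`, or
`ct(b) < ct(b')`, or the contents are equal, `b` lies in the second component and
`b'` in the first. -/
def boxLE (s : ℤ × ℤ) (b b' : Box) : Prop :=
  b = b' ∨ content s b < content s b' ∨
    (content s b = content s b' ∧ b.1 = 1 ∧ b'.1 = 0)

/-- The set of addable or removable boxes of residue `i` (the letters of the `i`-word). -/
def IWord (e : ℕ) (s : ℤ × ℤ) (bp : Partition × Partition) (i : ZMod e) : Set Box :=
  {b | (IsAddable bp b ∨ IsRemovable bp b) ∧ ((content s b : ZMod e) = i)}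

/-- A removable box of residue `i` surviving the Kashiwara cancellation: reading the
`i`-word in increasing order and cancelling each removable box with a following addable
box (recursively cancelling adjacent removable-addable pairs), `b` is not cancelled.
Equivalently, every final segment of the `i`-word starting at `b` contains strictly
more removable than addable boxes. -/
def SurvivingRemovable (e : ℕ) (s : ℤ × ℤ) (bp : Partition × Partition)
    (i : ZMod e) (b : Box) : Prop :=
  b ∈ IWord e s bp i ∧ IsRemovable bp b ∧
  ∀ c ∈ IWord e s bp i, boxLE s b c →
    {d : Box | d ∈ IWord e s bp i ∧ IsAddable bp d ∧ boxLE s b d ∧ boxLE s d c}.ncard <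
    {d : Box | d ∈ IWord e s bp i ∧ IsRemovable bp d ∧ boxLE s b d ∧ boxLE s d c}.ncard

/-- The good removable `i`-box: the smallest removable `i`-box surviving the
Kashiwara cancellation. -/
def IsGoodRemovable (e : ℕ) (s : ℤ × ℤ) (bp : Partition × Partition)
    (i : ZMod e) (b : Box) : Prop :=
  SurvivingRemovable e s bp i b ∧
  ∀ b' : Box, SurvivingRemovable e s bp i b' → boxLE s b b'

/-- An addable box of residue `i` surviving the Kashiwara cancellation. -/
def SurvivingAddable (e : ℕ) (s : ℤ × ℤ) (bp : Partition × Partition)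
    (i : ZMod e) (b : Box) : Prop :=
  b ∈ IWord e s bp i ∧ IsAddable bp b ∧
  ∀ c ∈ IWord e s bp i, boxLE s c b →
    {d : Box | d ∈ IWord e s bp i ∧ IsRemovable bp d ∧ boxLE s c d ∧ boxLE s d b}.ncard <
    {d : Box | d ∈ IWord e s bp i ∧ IsAddable bp d ∧ boxLE s c d ∧ boxLE s d b}.ncard

/-- The good addable `i`-box: the largest addable `i`-box surviving the
Kashiwara cancellation. -/
def IsGoodAddable (e : ℕ) (s : ℤ × ℤ) (bp : Partition × Partition)
    (i : ZMod e) (b : Box) : Prop :=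
  SurvivingAddable e s bp i b ∧
  ∀ b' : Box, SurvivingAddable e s bp i b' → boxLE s b' b

/-- A source vertex of the `ŝl_e`-crystal: no good removable `i`-box for any residue `i`. -/
def IsSlESource (e : ℕ) (s : ℤ × ℤ) (bp : Partition × Partition) : Prop :=
  ∀ (i : ZMod e) (b : Box), ¬ IsGoodRemovable e s bp i b

/-- `bp'` is obtained from `bp` by adding the box `b`. -/
def AddBox (bp : Partition × Partition) (b : Box) (bp' : Partition × Partition) : Prop :=
  if b.1 = 0 then
    bp'.2 = bp.2 ∧ bp'.1.part = Function.update bp.1.part b.2.1 (bp.1.part b.2.1 + 1)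
  else
    bp'.1 = bp.1 ∧ bp'.2.part = Function.update bp.2.part b.2.1 (bp.2.part b.2.1 + 1)

/-- Dominance order: `Dominates mu la` means `la ⊴ mu`. -/
def Dominates (mu la : Partition) : Prop :=
  ∀ k : ℕ, ∑ i ∈ Finset.range k, la.part i ≤ ∑ i ∈ Finset.range k, mu.part i

/-! ### Auxiliary material for Statement 5 -/

private lemma part_ext' {p q : Partition} (h : p.part = q.part) : p = q := by
  cases p; cases q; cases h; rfl

/-- Intermediate partitions `(t, t-1, …, j+2, j-1, j-2, …, 1)` in the chain of
2-hook removals from `Δ_t ⊔ 1` to `Δ_{t-2}`. -/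
def midPart (t j : ℕ) : Partition where
  part k := if k < t - 1 - j then t - k else if k < t - 2 then t - 2 - k else 0
  antitone i j' h := by (try dsimp only); split_ifs <;> omega
  eventually_zero := ⟨t, fun n hn => by (try dsimp only); split_ifs <;> omega⟩

private lemma staircaseColumn_part (t r k : ℕ) :
    (staircaseColumn t r).part k = if k < t then t - k else if k < t + r then 1 else 0 := rfl

private lemma midPart_part (t j k : ℕ) :
    (midPart t j).part k =
      if k < t - 1 - j then t - k else if k < t - 2 then t - 2 - k else 0 := rfl

private lemma staircase_part (s k : ℕ) : (staircase s).part k = s - k := rfl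

private lemma empty_part (k : ℕ) : emptyPartition.part k = 0 := rfl

private lemma column_part (n k : ℕ) : (column n).part k = if k < n then 1 else 0 := by
  show (if k < 0 then 3 else if k < 0 + 0 then 2 else if k < 0 + 0 + n then 1 else 0) = _
  split_ifs <;> omega

private lemma mem_betaSC (t r : ℕ) (z : ℤ) :
    z ∈ (staircaseColumn t r).betaSet ↔
      ((2 : ℤ) - t ≤ z ∧ z ≤ t ∧ ((t : ℤ) - z) % 2 = 0) ∨
      ((2 : ℤ) - t - r ≤ z ∧ z ≤ 1 - t) ∨ z ≤ -(t : ℤ) - r := by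
  simp only [Partition.betaSet, Set.mem_setOf_eq, staircaseColumn_part]
  constructor
  · rintro ⟨k, rfl⟩; split_ifs <;> omega
  · rintro (⟨h1, h2, h3⟩ | ⟨h1, h2⟩ | h)
    · refine ⟨(((t : ℤ) - z).toNat) / 2, ?_⟩; split_ifs <;> omega
    · refine ⟨((1 : ℤ) - z).toNat, ?_⟩; split_ifs <;> omega
    · refine ⟨(-z).toNat, ?_⟩; split_ifs <;> omega

private lemma mem_betaMP (t j : ℕ) (hj : j + 1 ≤ t) (z : ℤ) :
    z ∈ (midPart t j).betaSet ↔
      (2 * (j : ℤ) + 4 - t ≤ z ∧ z ≤ t ∧ ((t : ℤ) - z) % 2 = 0) ∨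
      (4 - (t : ℤ) ≤ z ∧ z ≤ 2 * (j : ℤ) - t ∧ ((t : ℤ) - z) % 2 = 0) ∨
      z ≤ 1 - (t : ℤ) ∨ (1 ≤ j ∧ z ≤ 2 - (t : ℤ)) := by
  simp only [Partition.betaSet, Set.mem_setOf_eq, midPart_part]
  constructor
  · rintro ⟨k, rfl⟩; split_ifs <;> omega
  · rintro (⟨h1, h2, h3⟩ | ⟨h1, h2, h3⟩ | h | ⟨h1, h2⟩)
    · refine ⟨(((t : ℤ) - z).toNat) / 2, ?_⟩; split_ifs <;> omega
    · refine ⟨(((t : ℤ) - 2 - z).toNat) / 2, ?_⟩; split_ifs <;> omega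
    · refine ⟨(-z).toNat, ?_⟩; split_ifs <;> omega
    · refine ⟨(-z).toNat, ?_⟩; split_ifs <;> omega

private lemma mem_betaStair (s : ℕ) (z : ℤ) :
    z ∈ (staircase s).betaSet ↔
      ((2 : ℤ) - s ≤ z ∧ z ≤ s ∧ ((s : ℤ) - z) % 2 = 0) ∨ z ≤ -(s : ℤ) := by
  simp only [Partition.betaSet, Set.mem_setOf_eq, staircase_part]
  constructor
  · rintro ⟨k, rfl⟩; omega
  · rintro (⟨h1, h2, h3⟩ | h)
    · exact ⟨(((s : ℤ) - z).toNat) / 2, by omega⟩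
    · exact ⟨(-z).toNat, by omega⟩

private lemma mem_chargedEmpty (c z : ℤ) :
    z ∈ emptyPartition.chargedBetaSet c ↔ z ≤ c := by
  simp only [Partition.chargedBetaSet, Set.mem_setOf_eq, empty_part]
  constructor
  · rintro ⟨k, rfl⟩; omega
  · intro h; exact ⟨(c - z).toNat, by omega⟩

private lemma mem_chargedColumn (n : ℕ) (c z : ℤ) :
    z ∈ (column n).chargedBetaSet c ↔ (c + 2 - n ≤ z ∧ z ≤ c + 1) ∨ z ≤ c - n := by
  simp only [Partition.chargedBetaSet, Set.mem_setOf_eq, column_part]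
  constructor
  · rintro ⟨k, rfl⟩; split_ifs <;> omega
  · rintro (⟨h1, h2⟩ | h)
    · refine ⟨(c + 1 - z).toNat, ?_⟩; split_ifs <;> omega
    · refine ⟨(c - z).toNat, ?_⟩; split_ifs <;> omega

private lemma hook_col (t j : ℕ) :
    RemoveHook 2 (staircaseColumn t (2 * j + 3)) (staircaseColumn t (2 * j + 1)) := by
  refine ⟨-(t : ℤ) - 2 * j, ?_, ?_, ?_⟩
  · rw [mem_betaSC]; push_cast; omega
  · rw [mem_betaSC]; push_cast; omega
  · ext z
    simp only [Set.mem_insert_iff, Set.mem_diff, Set.mem_singleton_iff, mem_betaSC]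
    push_cast; omega

private lemma hook_colend (t : ℕ) (ht : 2 ≤ t) :
    RemoveHook 2 (staircaseColumn t 1) (midPart t 0) := by
  refine ⟨2 - (t : ℤ), ?_, ?_, ?_⟩
  · rw [mem_betaSC]; push_cast; omega
  · rw [mem_betaSC]; push_cast; omega
  · ext z
    simp only [Set.mem_insert_iff, Set.mem_diff, Set.mem_singleton_iff, mem_betaSC,
      mem_betaMP t 0 (by omega : 0 + 1 ≤ t)]
    push_cast [false_and, or_false, true_and, and_true]; omega

private lemma hook_mid (t j : ℕ) (hj : j + 2 ≤ t) :
    RemoveHook 2 (midPart t j) (midPart t (j + 1)) := by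
  refine ⟨2 * (j : ℤ) + 4 - t, ?_, ?_, ?_⟩
  · rw [mem_betaMP t j (by omega)]; push_cast; omega
  · rw [mem_betaMP t j (by omega)]; push_cast; omega
  · ext z
    simp only [Set.mem_insert_iff, Set.mem_diff, Set.mem_singleton_iff,
      mem_betaMP t j (by omega : j + 1 ≤ t), mem_betaMP t (j+1) (by omega : (j+1) + 1 ≤ t)]
    push_cast [false_and, or_false, true_and, and_true]; omega

private lemma staircase_isECore (s : ℕ) : IsECore 2 (staircase s) := by
  rintro mu ⟨x, hx, hx2, -⟩
  rw [mem_betaStair] at hx hx2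
  push_cast at hx hx2
  omega

private lemma midPart_last (t : ℕ) (ht : 2 ≤ t) : midPart t (t - 1) = staircase (t - 2) := by
  refine part_ext' (funext fun k => ?_)
  rw [midPart_part, staircase_part]
  split_ifs <;> omega

private lemma chain_col (t : ℕ) :
    ∀ n : ℕ, Relation.ReflTransGen (RemoveHook 2)
      (staircaseColumn t (2 * n + 1)) (staircaseColumn t 1) := by
  intro n
  induction n with
  | zero => exact Relation.ReflTransGen.refl
  | succ n ih =>
      have h : 2 * (n + 1) + 1 = 2 * n + 3 := by omega
      rw [h]
      exact Relation.ReflTransGen.head (hook_col t n) ih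

private lemma chain_mid (t : ℕ) :
    ∀ j : ℕ, j + 1 ≤ t → Relation.ReflTransGen (RemoveHook 2) (midPart t 0) (midPart t j) := by
  intro j
  induction j with
  | zero => exact fun _ => Relation.ReflTransGen.refl
  | succ j ih =>
      intro h
      exact Relation.ReflTransGen.tail (ih (by omega)) (hook_mid t j (by omega))

/-- For `t ≥ 2`, `m ≥ 0`, the partition `Δ_t ⊔ 1^{2m+1}` has 2-core
`Δ_{t-2}` and twisted 2-quotient `τ(Δ_t ⊔ 1^{2m+1}) = |(∅, 1^{t+m}), s_{t-2}⟩`. -/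
theorem twisted_quotient_staircase_odd_column
    (e t m : ℕ) (he : Odd e) (he3 : 3 ≤ e) (ht : 2 ≤ t) :
    IsTwistedQuotient (t - 2) (staircaseColumn t (2 * m + 1))
      (emptyPartition, column (t + m)) := by
  have hchain : Relation.ReflTransGen (RemoveHook 2)
      (staircaseColumn t (2 * m + 1)) (staircase (t - 2)) := by
    refine ((chain_col t m).trans
      ((Relation.ReflTransGen.single (hook_colend t ht)).trans ?_))
    have h := chain_mid t (t - 1) (by omega)
    rwa [midPart_last t ht] at h
  refine ⟨⟨hchain, staircase_isECore (t - 2)⟩, ?_⟩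
  by_cases hpar : (t - 2) % 2 = 0
  · rw [if_pos hpar]
    constructor
    · refine ⟨1 - (t : ℤ) / 2, ?_⟩
      ext z
      simp only [mem_chargedEmpty, Set.mem_setOf_eq, mem_betaSC]
      push_cast; omega
    · refine ⟨(t : ℤ) / 2 - 1, ?_⟩
      ext z
      simp only [mem_chargedColumn, Set.mem_setOf_eq, mem_betaSC]
      push_cast; omega
  · rw [if_neg hpar]
    constructor
    · refine ⟨((t : ℤ) - 1) / 2, ?_⟩
      ext z
      simp only [mem_chargedColumn, Set.mem_setOf_eq, mem_betaSC]
      push_cast; omega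
    · refine ⟨-(((t : ℤ) - 1) / 2), ?_⟩
      ext z
      simp only [mem_chargedEmpty, Set.mem_setOf_eq, mem_betaSC]
      push_cast; omega

end GUnBranching
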